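/- arXiv:2410.00705 — 2 statements merged into one kernel-verified Lean document; each statement's English description precedes it below -/
import Mathlib

section
/- Given factor price changes Ŵ = Λ̄̂ + 1_F M̂ - L̄̂ (changes in expenditure-based factor shares, money supply, and factor supplies), budget identity M + T = nGDP with d(nGDP)/nGDP = (M/nGDP)M̂ + dT/nGDP, and Λ̄ᵀ1_F = (M+T)/M so that 1_Fᵀ dΛ̄ = dT/M - (T/M)M̂, the CPI formula P̂ = -(λ̄ᵀ - λ̃ᵀ)Ẑ + (Λ̄ᵀ - Λ̃ᵀ)Ŵ + (b̄_Mᵀ + b̃_Mᵀ)P̂_M is equivalent to P̂ = -(λ̄ᵀ - λ̃ᵀ)Ẑ - Λ̃ᵀ Λ̄̂ - (Λ̄ᵀ - Λ̃ᵀ)L̄̂ + dT/M + (1 - Λ̃ᵀ1_F)M̂ + (b̄_Mᵀ + b̃_Mᵀ)P̂_M, where Λ̃ᵀ = x̄ᵀΨA and Λ̄̂ denotes the vector of log-changes in factor shares weighted so that Λ̄ᵀΛ̄̂ = 1_FᵀdΛ̄. -/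
open Matrix

/-- Proposition 3: equivalence of the CPI formula in terms of factor prices with
the formula in terms of money supply, transfers, factor supplies and factor-share
reallocation. -/
theorem cpi_factor_quantities {n m f : ℕ}
    (Ψ : Matrix (Fin n) (Fin n) ℝ) (A : Matrix (Fin n) (Fin f) ℝ)
    (Γ : Matrix (Fin n) (Fin m) ℝ)
    (lam x bD Z : Fin n → ℝ) (Lam Lamhat Lhat W : Fin f → ℝ)
    (bM bMt PM : Fin m → ℝ)
    (Mny T dT Mhat : ℝ) (hM : Mny ≠ 0)
    (hbMt : bMt = (bD ᵥ* Ψ) ᵥ* Γ)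
    (hW : W = Lamhat + (fun _ => Mhat) - Lhat)
    (hsum : Lam ⬝ᵥ (fun _ => (1 : ℝ)) = (Mny + T) / Mny)
    (hdsum : Lam ⬝ᵥ Lamhat = dT / Mny - (T / Mny) * Mhat) :
    -((lam - x ᵥ* Ψ) ⬝ᵥ Z) + ((Lam - (x ᵥ* Ψ) ᵥ* A) ⬝ᵥ W) + ((bM + bMt) ⬝ᵥ PM)
      = -((lam - x ᵥ* Ψ) ⬝ᵥ Z) - (((x ᵥ* Ψ) ᵥ* A) ⬝ᵥ Lamhat)
        - ((Lam - (x ᵥ* Ψ) ᵥ* A) ⬝ᵥ Lhat) + dT / Mny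
        + (1 - ((x ᵥ* Ψ) ᵥ* A) ⬝ᵥ (fun _ => (1 : ℝ))) * Mhat
        + ((bM + bMt) ⬝ᵥ PM) := by
  subst hW
  set Lt := (x ᵥ* Ψ) ᵥ* A with hLt
  have hc : ∀ v : Fin f → ℝ, v ⬝ᵥ (fun _ => Mhat) = (v ⬝ᵥ (fun _ => (1 : ℝ))) * Mhat := by
    intro v
    simp [dotProduct, Finset.sum_mul, mul_comm, Finset.mul_sum]
  rw [show (Lam - Lt) ⬝ᵥ (Lamhat + (fun _ => Mhat) - Lhat)
      = Lam ⬝ᵥ Lamhat - Lt ⬝ᵥ Lamhat + (Lam ⬝ᵥ (fun _ => Mhat) - Lt ⬝ᵥ (fun _ => Mhat))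
        - (Lam - Lt) ⬝ᵥ Lhat by
    simp [sub_dotProduct, dotProduct_add, dotProduct_sub]; try ring]
  rw [hc, hc, hsum, hdsum]
  field_simp
  ring
end

section
/- In the three-sector model with labor the only factor, if the zero-profit relation 1 = Ψa + ΨΓ1 holds rowwise, λᵀ = b_TᵀΨ_T, and λᵀa = 1 (full labor income), then the CPI change satisfies d log CPI = (1 - b_Tᵀ(Ψ_T - Ψ)a) d log W + b_Tᵀ(Ψ_T - Ψ)a · d log P_M - (λᵀ - b_Tᵀ(Ψ_T - Ψ)) d log Z, given d log CPI = b_Tᵀ d log P + b_M(d log P_M - d log P_X) with d log P = Ψa d log W + ΨΓ d log P_M - Ψ d log Z and d log P_M = d log P_X (constant relative world prices). -/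
open Matrix

/-- CPI changes in the three-sector model with labor the only factor. -/
theorem three_sector_cpi
    (Ψ ΨT : Matrix (Fin 2) (Fin 2) ℝ)
    (a bT Γ lam dZ dP : Fin 2 → ℝ)
    (dW dPM dPX bMshare dCPI : ℝ)
    (hzp : (fun _ => (1 : ℝ)) = Ψ *ᵥ a + Ψ *ᵥ Γ)
    (hlam : lam = bT ᵥ* ΨT)
    (hfac : lam ⬝ᵥ a = 1)
    (hbsum : bT ⬝ᵥ (fun _ => (1 : ℝ)) = 1)
    (hP : dP = dW • (Ψ *ᵥ a) + dPM • (Ψ *ᵥ Γ) - Ψ *ᵥ dZ)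
    (hCPI : dCPI = bT ⬝ᵥ dP + bMshare * (dPM - dPX))
    (hrel : dPM = dPX) :
    dCPI = (1 - bT ⬝ᵥ ((ΨT - Ψ) *ᵥ a)) * dW
      + (bT ⬝ᵥ ((ΨT - Ψ) *ᵥ a)) * dPM
      - (lam - bT ᵥ* (ΨT - Ψ)) ⬝ᵥ dZ := by
  have h0 := congrFun hzp 0
  have h1 := congrFun hzp 1
  subst hlam hP hCPI hrel
  simp only [Matrix.mulVec, Matrix.vecMul, dotProduct, Pi.add_apply, Pi.sub_apply,
    Pi.smul_apply, Matrix.sub_apply, Fin.sum_univ_two, smul_eq_mul] at *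
  linear_combination (dW - dPM) * hfac - dPM * (bT 0 * h0 + bT 1 * h1) + dPM * hbsum
end
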